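/- Let S be a nonzero subspace of V with orthogonal projection P_S, and let J be a subset of Fin n. Then the range of the partial trace Tr_{Jᶜ}(P_S) equals the supremum, over all positive semidefinite linear operators ρ on V whose range is contained in S, of the ranges of Tr_{Jᶜ}(ρ). (That is, the reduced spaces of S are exactly computed by the maximally mixed state on S.) -/

import Mathlib

/-!
Setup: `n` particles with local dimensions `d : Fin n → ℕ`.
`EV d` is the `n`-particle inner product space `EuclideanSpace ℂ (Config d)`
of functions `(∀ i, Fin (d i)) → ℂ` with the standard inner product.
For `J : Finset (Fin n)`, `PConfig d J` is the type of `J`-configurations and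
`VJ d J` the corresponding space.  `merge` builds a full configuration,
`contr` is the contraction `ψ_b`, and `ptrace d J T` is the partial trace
`Tr_{Jᶜ}(T)`, defined through its matrix entries
`(a, a') ↦ ∑_b ⟪e_{merge a b}, T e_{merge a' b}⟫`.
-/

namespace GSS

variable {n : ℕ}

abbrev Config (d : Fin n → ℕ) : Type := ∀ i : Fin n, Fin (d i)

/-- The `n`-particle inner product space. -/
abbrev EV (d : Fin n → ℕ) : Type := EuclideanSpace ℂ (Config d)

abbrev PConfig (d : Fin n → ℕ) (J : Finset (Fin n)) : Type := ∀ i : J, Fin (d i.1)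

abbrev VJ (d : Fin n → ℕ) (J : Finset (Fin n)) : Type := PConfig d J → ℂ

/-- The full configuration equal to `a` on `J` and to `b` on `Jᶜ`. -/
def merge (d : Fin n → ℕ) (J : Finset (Fin n)) (a : PConfig d J) (b : PConfig d Jᶜ) :
    Config d := fun i =>
  if h : i ∈ J then a ⟨i, h⟩ else b ⟨i, Finset.mem_compl.mpr h⟩

/-- The contraction `ψ_b ∈ V_J` of `ψ ∈ V`: `ψ_b(a) = ψ(merge a b)`. -/
def contr (d : Fin n → ℕ) (J : Finset (Fin n)) (ψ : EV d) (b : PConfig d Jᶜ) :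
    VJ d J := fun a => ψ (merge d J a b)

/-- The partial trace `Tr_{Jᶜ}(T)`, the operator on `V_J` with matrix entries
`(a, a') ↦ ∑_b ⟪e_{merge a b}, T e_{merge a' b}⟫` in the standard basis. -/
noncomputable def ptrace (d : Fin n → ℕ) (J : Finset (Fin n)) (T : EV d →ₗ[ℂ] EV d) :
    VJ d J →ₗ[ℂ] VJ d J :=
  Matrix.toLin' (fun a a' : PConfig d J =>
    ∑ b : PConfig d Jᶜ,
      (inner ℂ (EuclideanSpace.single (merge d J a b) (1 : ℂ))
        (T (EuclideanSpace.single (merge d J a' b) (1 : ℂ))) : ℂ))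

end GSS

open GSS
open scoped ComplexOrder

/-- `ρ` is positive semidefinite: `⟪ρ ψ, ψ⟫ ≥ 0` (in the order of `ℂ`, hence
real and nonnegative) for every `ψ`.  -/
def IsPSD {n : ℕ} {d : Fin n → ℕ} (ρ : EV d →ₗ[ℂ] EV d) : Prop :=
  ∀ ψ : EV d, 0 ≤ (inner ℂ (ρ ψ) ψ : ℂ)

section Test
variable {n : ℕ} {d : Fin n → ℕ} {J : Finset (Fin n)}

noncomputable abbrev W (d : Fin n → ℕ) (J : Finset (Fin n)) := EuclideanSpace ℂ (PConfig d J)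

-- test defeq between VJ and W
noncomputable example (ρ : EV d →ₗ[ℂ] EV d) (φ : W d J) : VJ d J := ptrace d J ρ φ

-- restriction lemmas
lemma merge_restrict_J (a : PConfig d J) (b : PConfig d Jᶜ) (i : J) :
    merge d J a b i = a i := by
  simp [merge]

lemma merge_restrict_Jc (a : PConfig d J) (b : PConfig d Jᶜ) (i : ↥(Jᶜ)) :
    merge d J a b i = b i := by
  have h : (i : Fin n) ∉ J := Finset.mem_compl.mp i.2
  simp [merge, h]

def configEquiv (d : Fin n → ℕ) (J : Finset (Fin n)) :
    Config d ≃ (PConfig d J × PConfig d Jᶜ) where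
  toFun x := (fun i => x i, fun i => x i)
  invFun p := merge d J p.1 p.2
  left_inv x := by
    funext i
    by_cases h : i ∈ J <;> simp [merge, h]
  right_inv p := Prod.ext (funext fun i => merge_restrict_J _ _ i)
    (funext fun i => merge_restrict_Jc _ _ i)

end Test

section Main
variable {n : ℕ} {d : Fin n → ℕ} {J : Finset (Fin n)}

open scoped ComplexOrder

noncomputable def emb (d : Fin n → ℕ) (J : Finset (Fin n)) (b : PConfig d Jᶜ) :
    VJ d J →ₗ[ℂ] EV d where
  toFun φ := WithLp.toLp 2 (fun x : Config d => if (fun i : ↥(Jᶜ) => x i) = b then φ (fun i : J => x i) else 0)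
  map_add' φ χ := by
    ext x
    by_cases h : (fun i : ↥(Jᶜ) => x i) = b <;> simp [h]
  map_smul' c φ := by
    ext x
    by_cases h : (fun i : ↥(Jᶜ) => x i) = b <;> simp [h]

lemma emb_merge (b : PConfig d Jᶜ) (φ : VJ d J) (a : PConfig d J) :
    emb d J b φ (merge d J a b) = φ a := by
  have h2 : (fun i : ↥(Jᶜ) => merge d J a b i) = b := funext fun i => merge_restrict_Jc a b i
  have h1 : (fun i : J => merge d J a b i) = a := funext fun i => merge_restrict_J a b i
  simp [emb, h2, h1]

lemma emb_merge_ne (b b' : PConfig d Jᶜ) (hb : b' ≠ b) (φ : VJ d J) (a : PConfig d J) :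
    emb d J b φ (merge d J a b') = 0 := by
  have h2 : (fun i : ↥(Jᶜ) => merge d J a b' i) = b' := funext fun i => merge_restrict_Jc a b' i
  simp [emb, h2, hb]

/-- L1 : inner products against `emb`. -/
lemma inner_emb_left (b : PConfig d Jᶜ) (φ : VJ d J) (ψ : EV d) :
    (inner ℂ (emb d J b φ) ψ : ℂ) = ∑ a : PConfig d J, (starRingEnd ℂ) (φ a) * ψ (merge d J a b) := by
  rw [PiLp.inner_apply]
  rw [← Equiv.sum_comp (configEquiv d J).symm (fun x => (inner ℂ ((emb d J b φ) x) (ψ x) : ℂ))]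
  rw [Fintype.sum_prod_type]
  rw [Finset.sum_comm]
  have : ∀ b' : PConfig d Jᶜ, ∑ a : PConfig d J,
      (inner ℂ ((emb d J b φ) ((configEquiv d J).symm (a, b'))) (ψ ((configEquiv d J).symm (a, b'))) : ℂ)
      = if b' = b then ∑ a : PConfig d J, (starRingEnd ℂ) (φ a) * ψ (merge d J a b) else 0 := by
    intro b'
    by_cases h : b' = b
    · subst h
      simp only [if_pos rfl]
      refine Finset.sum_congr rfl fun a _ => ?_
      simp [configEquiv, emb_merge, RCLike.inner_apply, mul_comm]
    · simp only [if_neg h]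
      refine Finset.sum_eq_zero fun a _ => ?_
      simp [configEquiv, emb_merge_ne b b' h, RCLike.inner_apply]
  rw [Finset.sum_congr rfl fun b' _ => this b']
  simp

lemma merge_inj {a a' : PConfig d J} {b b' : PConfig d Jᶜ}
    (h : merge d J a b = merge d J a' b') : a = a' ∧ b = b' := by
  have := (configEquiv d J).symm.injective (a₁ := (a, b)) (a₂ := (a', b')) h
  exact ⟨congrArg Prod.fst this, congrArg Prod.snd this⟩

lemma emb_eq_sum_single (b : PConfig d Jᶜ) (φ : VJ d J) :
    emb d J b φ = ∑ a : PConfig d J, φ a • EuclideanSpace.single (merge d J a b) (1 : ℂ) := by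
  ext x
  obtain ⟨⟨a', b'⟩, rfl⟩ : ∃ p : PConfig d J × PConfig d Jᶜ, (configEquiv d J).symm p = x :=
    (configEquiv d J).symm.surjective x
  have hx : (configEquiv d J).symm (a', b') = merge d J a' b' := rfl
  rw [hx]
  rw [WithLp.ofLp_sum, Finset.sum_apply]
  by_cases h : b' = b
  · subst h
    rw [emb_merge]
    rw [Finset.sum_eq_single a']
    · simp [EuclideanSpace.single_apply]
    · intro a _ ha
      have : merge d J a' b' ≠ merge d J a b' := fun hc => ha ((merge_inj hc.symm).1)
      simp [EuclideanSpace.single_apply, this]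
    · intro h; exact absurd (Finset.mem_univ a') h
  · rw [emb_merge_ne b b' h]
    refine (Finset.sum_eq_zero fun a _ => ?_).symm
    have : merge d J a' b' ≠ merge d J a b := fun hc => h ((merge_inj hc).2)
    simp [EuclideanSpace.single_apply, this]

/-- L3 : the partial trace as a sum of contractions. -/
lemma ptrace_apply (ρ : EV d →ₗ[ℂ] EV d) (φ : VJ d J) :
    ptrace d J ρ φ = ∑ b : PConfig d Jᶜ, contr d J (ρ (emb d J b φ)) b := by
  funext a
  rw [ptrace]
  erw [Matrix.toLin'_apply]
  rw [Finset.sum_apply]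
  show (∑ a' : PConfig d J, (∑ b : PConfig d Jᶜ,
      (inner ℂ (EuclideanSpace.single (merge d J a b) (1 : ℂ))
        (ρ (EuclideanSpace.single (merge d J a' b) (1 : ℂ))) : ℂ)) * φ a') = _
  have step : ∀ a' b, (inner ℂ (EuclideanSpace.single (merge d J a b) (1 : ℂ))
      (ρ (EuclideanSpace.single (merge d J a' b) (1 : ℂ))) : ℂ)
      = ρ (EuclideanSpace.single (merge d J a' b) (1 : ℂ)) (merge d J a b) := by
    intro a' b
    rw [EuclideanSpace.inner_single_left]
    simp
  simp only [step]
  simp only [Finset.sum_mul]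
  rw [Finset.sum_comm]
  refine Finset.sum_congr rfl fun b _ => ?_
  have : ∀ a' : PConfig d J,
      ρ (EuclideanSpace.single (merge d J a' b) (1 : ℂ)) (merge d J a b) * φ a'
      = (ρ (φ a' • EuclideanSpace.single (merge d J a' b) (1 : ℂ))) (merge d J a b) := by
    intro a'
    rw [map_smul]
    simp [mul_comm]
  simp only [this]
  rw [contr]
  have hsum := map_sum (EuclideanSpace.projₗ (𝕜 := ℂ) (merge d J a b) ∘ₗ ρ)
    (fun a' => φ a' • EuclideanSpace.single (merge d J a' b) (1 : ℂ)) Finset.univ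
  have hsum' : ρ (∑ a' : PConfig d J, φ a' • EuclideanSpace.single (merge d J a' b) (1 : ℂ))
      (merge d J a b)
      = ∑ a' : PConfig d J,
        ρ (φ a' • EuclideanSpace.single (merge d J a' b) (1 : ℂ)) (merge d J a b) := hsum
  rw [← hsum', ← emb_eq_sum_single]

noncomputable def toW (φ : VJ d J) : EuclideanSpace ℂ (PConfig d J) := WithLp.toLp 2 φ

/-- Inner product in `W` against a partial trace. -/
lemma inner_toW_ptrace (ρ : EV d →ₗ[ℂ] EV d) (φ χ : VJ d J) :
    (inner ℂ (toW χ) (toW (ptrace d J ρ φ)) : ℂ)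
      = ∑ b : PConfig d Jᶜ, (inner ℂ (emb d J b χ) (ρ (emb d J b φ)) : ℂ) := by
  rw [PiLp.inner_apply]
  have : ∀ a : PConfig d J, (inner ℂ (toW χ a) (toW (ptrace d J ρ φ) a) : ℂ)
      = ∑ b : PConfig d Jᶜ, (starRingEnd ℂ) (χ a) * (ρ (emb d J b φ)) (merge d J a b) := by
    intro a
    have h1 : toW (ptrace d J ρ φ) a
        = ∑ b : PConfig d Jᶜ, (ρ (emb d J b φ)) (merge d J a b) := by
      show (ptrace d J ρ φ) a = _
      rw [ptrace_apply, Finset.sum_apply]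
      rfl
    rw [RCLike.inner_apply, mul_comm, h1, Finset.mul_sum]
    rfl
  simp only [this]
  rw [Finset.sum_comm]
  exact Finset.sum_congr rfl fun b _ => (inner_emb_left b χ (ρ (emb d J b φ))).symm

/-- Inner product in `W` against a contraction. -/
lemma inner_toW_contr (ψ : EV d) (b : PConfig d Jᶜ) (φ : VJ d J) :
    (inner ℂ (toW (contr d J ψ b)) (toW φ) : ℂ) = (inner ℂ ψ (emb d J b φ) : ℂ) := by
  conv_rhs => rw [← inner_conj_symm, inner_emb_left, map_sum]
  rw [PiLp.inner_apply]
  refine Finset.sum_congr rfl fun a _ => ?_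
  simp only [map_mul, RCLike.inner_apply, Complex.conj_conj]
  simp [contr, toW, mul_comm]

end Main

section Abstract

open scoped ComplexOrder

variable {E : Type*} [NormedAddCommGroup E] [InnerProductSpace ℂ E]

lemma conj_of_nonneg {z : ℂ} (hz : 0 ≤ z) : (starRingEnd ℂ) z = z := by
  rw [Complex.le_def] at hz
  exact Complex.conj_eq_iff_im.mpr hz.2.symm

lemma psd_apply_eq_zero (ρ : E →ₗ[ℂ] E) (hsym : ρ.IsSymmetric)
    (hpsd : ∀ ψ : E, 0 ≤ (inner ℂ (ρ ψ) ψ : ℂ)) {x : E}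
    (hx : (inner ℂ (ρ x) x : ℂ) = 0) : ρ x = 0 := by
  suffices h : ∀ y : E, (inner ℂ (ρ x) y : ℂ) = 0 by
    exact inner_self_eq_zero.mp (h (ρ x))
  intro y
  set a : ℂ := (inner ℂ (ρ x) y : ℂ) with ha
  have him : ((inner ℂ (ρ y) y : ℂ)).im = 0 := by
    have h0 := hpsd y
    rw [Complex.le_def] at h0
    exact h0.2.symm
  set c : ℝ := ((inner ℂ (ρ y) y : ℂ)).re with hcdef
  have hr : (inner ℂ (ρ y) y : ℂ) = (c : ℂ) := by
    apply Complex.ext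
    · simp [hcdef]
    · simp [him]
  have hc : 0 ≤ c := by
    have h0 := hpsd y
    rw [Complex.le_def] at h0
    simpa using h0.1
  have h1 : (inner ℂ (ρ y) x : ℂ) = (starRingEnd ℂ) a := by
    rw [hsym y x, ← inner_conj_symm]
  have expand : ∀ s : ℂ, (inner ℂ (ρ (x + s • y)) (x + s • y) : ℂ)
      = s * a + (starRingEnd ℂ) s * (starRingEnd ℂ) a + (starRingEnd ℂ) s * s * (c : ℂ) := by
    intro s
    rw [map_add, map_smul]
    simp only [inner_add_left, inner_add_right, inner_smul_left, inner_smul_right, hx, h1, hr,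
      ← ha]
    ring
  set t : ℝ := 1 / (c + 1) with htdef
  set N : ℝ := Complex.normSq a with hN
  have key := hpsd (x + (-(t : ℂ) * (starRingEnd ℂ) a) • y)
  rw [expand] at key
  have hre : (-(t : ℂ) * (starRingEnd ℂ) a) * a
      + (starRingEnd ℂ) (-(t : ℂ) * (starRingEnd ℂ) a) * (starRingEnd ℂ) a
      + (starRingEnd ℂ) (-(t : ℂ) * (starRingEnd ℂ) a) * (-(t : ℂ) * (starRingEnd ℂ) a) * (c : ℂ)
      = ((-2 * t * N + t ^ 2 * N * c : ℝ) : ℂ) := by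
    simp only [map_mul, map_neg, Complex.conj_conj, Complex.conj_ofReal]
    have : a * (starRingEnd ℂ) a = (N : ℂ) := Complex.mul_conj a
    push_cast
    linear_combination (-2*(t:ℂ) + (t:ℂ)^2*(c:ℂ)) * this
  rw [hre] at key
  have hNew : (0 : ℝ) ≤ -2 * t * N + t ^ 2 * N * c := by
    rw [Complex.le_def] at key
    simpa [← Complex.ofReal_pow] using key.1
  have htpos : 0 < t := by
    have : (0 : ℝ) < c + 1 := by linarith
    exact one_div_pos.mpr this
  have hNnn : 0 ≤ N := Complex.normSq_nonneg a
  have htc : t * c ≤ 1 := by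
    rw [htdef, div_mul_eq_mul_div, div_le_one (by linarith : (0:ℝ) < c + 1)]
    linarith
  have hNle : N ≤ 0 := by
    nlinarith [mul_le_mul_of_nonneg_left htc (mul_nonneg htpos.le hNnn)]
  have hN0 : N = 0 := le_antisymm hNle hNnn
  exact Complex.normSq_eq_zero.mp hN0

end Abstract

section Abstract2
open scoped ComplexOrder
variable {E : Type*} [NormedAddCommGroup E] [InnerProductSpace ℂ E] [FiniteDimensional ℂ E]

lemma mem_range_of_orth_ker (T : E →ₗ[ℂ] E) (hsym : T.IsSymmetric) {v : E}
    (hv : ∀ φ : E, T φ = 0 → (inner ℂ φ v : ℂ) = 0) : v ∈ LinearMap.range T := by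
  have hker : LinearMap.ker T = (LinearMap.range T)ᗮ := by
    ext x
    constructor
    · intro hx
      rw [Submodule.mem_orthogonal]
      rintro u ⟨y, rfl⟩
      rw [hsym y x, LinearMap.mem_ker.mp hx, inner_zero_right]
    · intro hx
      rw [LinearMap.mem_ker]
      have h2 : (inner ℂ (T (T x)) x : ℂ) = 0 :=
        (Submodule.mem_orthogonal _ _).mp hx (T (T x)) ⟨T x, rfl⟩
      have h1 : (inner ℂ (T x) (T x) : ℂ) = 0 := by
        rw [hsym x (T x), ← inner_conj_symm, h2, map_zero]
      exact inner_self_eq_zero.mp h1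
  have hv' : v ∈ (LinearMap.ker T)ᗮ := by
    rw [Submodule.mem_orthogonal]
    intro u hu
    exact hv u (LinearMap.mem_ker.mp hu)
  rwa [hker, Submodule.orthogonal_orthogonal] at hv'

end Abstract2

section Main2
open scoped ComplexOrder
variable {n : ℕ} {d : Fin n → ℕ} {J : Finset (Fin n)}

/-- the partial trace of a symmetric operator is symmetric (as operator on `W`). -/
lemma ptrace_symmetric (ρ : EV d →ₗ[ℂ] EV d) (hsym : ρ.IsSymmetric)
    (φ χ : VJ d J) :
    (inner ℂ (toW (ptrace d J ρ φ)) (toW χ) : ℂ)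
      = (inner ℂ (toW φ) (toW (ptrace d J ρ χ)) : ℂ) := by
  rw [← inner_conj_symm, inner_toW_ptrace, inner_toW_ptrace, map_sum]
  refine Finset.sum_congr rfl fun b _ => ?_
  rw [inner_conj_symm, hsym (emb d J b φ) (emb d J b χ)]

lemma IsPSD.symmetric {ρ : EV d →ₗ[ℂ] EV d} (hpsd : IsPSD ρ) : ρ.IsSymmetric :=
  (LinearMap.isSymmetric_iff_inner_map_self_real ρ).mpr fun ψ => conj_of_nonneg (hpsd ψ)

/-- Main structural lemma: the range of the partial trace of a PSD operator is the
span of the contractions of vectors in its range. -/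
lemma range_ptrace_psd (ρ : EV d →ₗ[ℂ] EV d) (hpsd : IsPSD ρ) :
    LinearMap.range (ptrace d J ρ)
      = Submodule.span ℂ {v : VJ d J | ∃ ψ b, v = contr d J (ρ ψ) b} := by
  have hsym := hpsd.symmetric
  apply le_antisymm
  · rintro _ ⟨φ, rfl⟩
    rw [ptrace_apply]
    exact Submodule.sum_mem _ fun b _ =>
      Submodule.subset_span ⟨emb d J b φ, b, rfl⟩
  · rw [Submodule.span_le]
    rintro _ ⟨ψ, b₀, rfl⟩
    -- work in W
    set T' : EuclideanSpace ℂ (PConfig d J) →ₗ[ℂ] EuclideanSpace ℂ (PConfig d J) :=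
      { toFun := fun φ => toW (ptrace d J ρ φ)
        map_add' := fun x y => congrArg toW ((ptrace d J ρ).map_add x y)
        map_smul' := fun c x => congrArg toW ((ptrace d J ρ).map_smul c x) } with hT'
    have hT'sym : T'.IsSymmetric := fun φ χ => ptrace_symmetric ρ hsym φ χ
    have hmem : toW (contr d J (ρ ψ) b₀) ∈ LinearMap.range T' := by
      apply mem_range_of_orth_ker T' hT'sym
      intro φ hφ
      -- φ ∈ ker T'
      have hzero : ∀ b : PConfig d Jᶜ, ρ (emb d J b φ) = 0 := by
        have hsum : ∑ b : PConfig d Jᶜ, (inner ℂ (emb d J b φ) (ρ (emb d J b φ)) : ℂ) = 0 := by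
          rw [← inner_toW_ptrace ρ φ φ]
          show (inner ℂ (toW φ) (T' φ) : ℂ) = 0
          rw [hφ, inner_zero_right]
        have hterm : ∀ b : PConfig d Jᶜ, (0:ℂ) ≤ (inner ℂ (emb d J b φ) (ρ (emb d J b φ)) : ℂ) := by
          intro b
          have h := hpsd (emb d J b φ)
          rw [← inner_conj_symm, conj_of_nonneg h]
          exact h
        have := (Finset.sum_eq_zero_iff_of_nonneg (fun b _ => hterm b)).mp hsum
        intro b
        apply psd_apply_eq_zero ρ hsym hpsd
        have hb := this b (Finset.mem_univ b)
        rw [← inner_conj_symm, hb, map_zero]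
      have : (inner ℂ (toW (contr d J (ρ ψ) b₀)) (toW φ) : ℂ) = 0 := by
        rw [inner_toW_contr, hsym ψ (emb d J b₀ φ), hzero b₀, inner_zero_right]
      rw [← inner_conj_symm]
      simp only [toW] at this ⊢
      rw [this, map_zero]
    obtain ⟨φ, hφ⟩ := hmem
    exact ⟨φ, congrArg WithLp.ofLp hφ⟩

end Main2

/-- the range of the partial trace of the orthogonal projection onto a
nonzero subspace `S` equals the supremum of the ranges of the partial traces of all
positive semidefinite operators whose range is contained in `S`. -/
theorem stmt0 (n : ℕ) (hn : 1 ≤ n) (d : Fin n → ℕ)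
    (S : Submodule ℂ (EV d)) (hS : S ≠ ⊥) (J : Finset (Fin n)) :
    LinearMap.range (ptrace d J (S.subtype ∘ₗ S.orthogonalProjectionOnto.toLinearMap)) =
      ⨆ ρ ∈ {ρ : EV d →ₗ[ℂ] EV d | IsPSD ρ ∧ LinearMap.range ρ ≤ S},
        LinearMap.range (ptrace d J ρ) := by
  set P : EV d →ₗ[ℂ] EV d := S.subtype ∘ₗ S.orthogonalProjectionOnto.toLinearMap with hP
  have hPapply : ∀ ψ : EV d, P ψ = ↑(S.orthogonalProjectionOnto ψ) := fun ψ => rfl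
  have hPpsd : IsPSD P := by
    intro ψ
    have hmem : ψ - P ψ ∈ Sᗮ := by
      rw [hPapply]
      exact Submodule.sub_starProjection_mem_orthogonal (K := S) ψ
    have horth : (inner ℂ (P ψ) (ψ - P ψ) : ℂ) = 0 :=
      (Submodule.mem_orthogonal S (ψ - P ψ)).mp hmem (P ψ) (S.orthogonalProjectionOnto ψ).2
    have key : (inner ℂ (P ψ) ψ : ℂ) = inner ℂ (P ψ) (P ψ) := by
      have h2 := inner_add_right (𝕜 := ℂ) (P ψ) (P ψ) (ψ - P ψ)
      rw [show P ψ + (ψ - P ψ) = ψ from by abel] at h2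
      rw [h2, horth, add_zero]
    rw [key, Complex.le_def]
    exact ⟨by simpa using inner_self_nonneg (𝕜 := ℂ) (x := P ψ),
      by simpa using (inner_self_im (𝕜 := ℂ) (P ψ)).symm⟩
  have hPrange : LinearMap.range P ≤ S := by
    rintro _ ⟨ψ, rfl⟩
    exact (S.orthogonalProjectionOnto ψ).2
  have hPid : ∀ v ∈ S, P v = v := by
    intro v hv
    rw [hPapply]
    exact Submodule.starProjection_eq_self_iff.mpr hv
  apply le_antisymm
  · exact le_iSup₂_of_le P ⟨hPpsd, hPrange⟩ le_rfl
  · apply iSup₂_le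
    intro ρ hρ
    rw [range_ptrace_psd ρ hρ.1, range_ptrace_psd P hPpsd]
    apply Submodule.span_mono
    rintro _ ⟨ψ, b, rfl⟩
    exact ⟨ρ ψ, b, by rw [hPid (ρ ψ) (hρ.2 ⟨ψ, rfl⟩)]⟩
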